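/- The function f : (0,∞) → ℝ, f(x) = I₁(x)/I₀(x), where Iₙ is the n-th modified Bessel function of the first kind, is strictly increasing and has range (0,1); in particular 0 < I₁(x)/I₀(x) < 1 for all x > 0, f(x) → 0 as x → 0⁺, and f(x) → 1 as x → ∞. -/

import Mathlib

open Real MeasureTheory intervalIntegral Set Filter Metric

/-- The modified Bessel function `I₀(x) = (1/2π)∫₀^{2π} e^{x cos θ} dθ`. -/
noncomputable def besselI0 (x : ℝ) : ℝ :=
  (1 / (2 * π)) * ∫ θ in (0:ℝ)..(2 * π), Real.exp (x * Real.cos θ)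

/-- The modified Bessel function `I₁(x) = (1/2π)∫₀^{2π} e^{x cos θ} cos θ dθ`. -/
noncomputable def besselI1 (x : ℝ) : ℝ :=
  (1 / (2 * π)) * ∫ θ in (0:ℝ)..(2 * π), Real.exp (x * Real.cos θ) * Real.cos θ

noncomputable def bbF (x : ℝ) : ℝ := ∫ θ in (0:ℝ)..(2*π), Real.exp (x * Real.cos θ)
noncomputable def bbG (x : ℝ) : ℝ := ∫ θ in (0:ℝ)..(2*π), Real.exp (x * Real.cos θ) * Real.cos θ
noncomputable def bbH (x : ℝ) : ℝ :=
  ∫ θ in (0:ℝ)..(2*π), Real.exp (x * Real.cos θ) * Real.cos θ * Real.cos θ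

lemma bb_integrable (x : ℝ) {g : ℝ → ℝ} (hg : Continuous g) {a b : ℝ} :
    IntervalIntegrable (fun θ => Real.exp (x * Real.cos θ) * g θ) volume a b :=
  (((Real.continuous_exp.comp (continuous_const.mul Real.continuous_cos))).mul hg).intervalIntegrable a b

lemma bb_hasDerivAt {g : ℝ → ℝ} (hg : Continuous g) (hgb : ∀ θ, |g θ| ≤ 1) (x₀ : ℝ) :
    HasDerivAt (fun x => ∫ θ in (0:ℝ)..(2*π), Real.exp (x * Real.cos θ) * g θ)
      (∫ θ in (0:ℝ)..(2*π), Real.exp (x₀ * Real.cos θ) * Real.cos θ * g θ) x₀ := by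
  have h := intervalIntegral.hasDerivAt_integral_of_dominated_loc_of_deriv_le
    (F := fun x θ => Real.exp (x * Real.cos θ) * g θ)
    (F' := fun x θ => Real.exp (x * Real.cos θ) * Real.cos θ * g θ)
    (a := (0:ℝ)) (b := 2*π) (μ := volume)
    (bound := fun _ => Real.exp (|x₀| + 1)) (x₀ := x₀) (s := ball x₀ 1) (ball_mem_nhds x₀ one_pos)
    (Eventually.of_forall fun x =>
      (((Real.continuous_exp.comp (continuous_const.mul Real.continuous_cos))).mul
        hg).aestronglyMeasurable)
    (bb_integrable x₀ hg)
    (Continuous.aestronglyMeasurable (by continuity))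
    (Eventually.of_forall fun θ _ x hx => ?_)
    (intervalIntegrable_const)
    (Eventually.of_forall fun θ _ x _ => ?_)
  · exact h.2
  · have hx' : |x| ≤ |x₀| + 1 := by
      have := abs_sub_abs_le_abs_sub x x₀
      have h2 : |x - x₀| < 1 := by simpa [Real.dist_eq] using hx
      linarith
    have h1 : Real.exp (x * Real.cos θ) ≤ Real.exp (|x₀| + 1) := by
      apply Real.exp_le_exp.2
      calc x * Real.cos θ ≤ |x * Real.cos θ| := le_abs_self _
        _ = |x| * |Real.cos θ| := abs_mul _ _
        _ ≤ (|x₀| + 1) * 1 := by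
            exact mul_le_mul hx' (Real.abs_cos_le_one θ) (abs_nonneg _) (by positivity)
        _ = |x₀| + 1 := mul_one _
    have h2 : ‖Real.exp (x * Real.cos θ) * Real.cos θ * g θ‖
        = Real.exp (x * Real.cos θ) * |Real.cos θ| * |g θ| := by
      rw [Real.norm_eq_abs, abs_mul, abs_mul, abs_of_pos (Real.exp_pos _)]
    rw [h2]
    calc Real.exp (x * Real.cos θ) * |Real.cos θ| * |g θ|
        ≤ Real.exp (x * Real.cos θ) * 1 * 1 := by
          apply mul_le_mul (mul_le_mul le_rfl (Real.abs_cos_le_one θ)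
            (abs_nonneg _) (Real.exp_pos _).le) (hgb θ) (abs_nonneg _)
          positivity
      _ = Real.exp (x * Real.cos θ) := by ring
      _ ≤ Real.exp (|x₀| + 1) := h1
  · have h1 : HasDerivAt (fun x : ℝ => x * Real.cos θ) (Real.cos θ) x :=
      hasDerivAt_mul_const _
    have h2 := (h1.exp).mul_const (g θ)
    simpa [mul_comm, mul_assoc, mul_left_comm] using h2

lemma bbF_pos (x : ℝ) : 0 < bbF x :=
  intervalIntegral_pos_of_pos (by simpa using bb_integrable x (continuous_const (y := (1:ℝ))))
    (fun θ => by positivity) (by positivity)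

lemma bbF_sub_bbG_pos (x : ℝ) : 0 < bbF x - bbG x := by
  have h : bbF x - bbG x = ∫ θ in (0:ℝ)..(2*π), Real.exp (x * Real.cos θ) * (1 - Real.cos θ) := by
    rw [bbF, bbG, ← intervalIntegral.integral_sub (by simpa using bb_integrable x (continuous_const (y := (1:ℝ))))
      (bb_integrable x Real.continuous_cos)]
    apply intervalIntegral.integral_congr
    intro θ _; ring
  rw [h]
  apply intervalIntegral_pos_of_pos_on
    (bb_integrable x (by continuity)) _ (by positivity)
  intro θ hθ
  have hc : Real.cos θ < 1 := by
    rcases lt_or_eq_of_le (Real.cos_le_one θ) with h1 | h1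
    · exact h1
    exfalso
    have := (Real.cos_eq_one_iff_of_lt_of_lt (by linarith [hθ.1, Real.pi_pos]) hθ.2).1 h1
    exact hθ.1.ne' this
  have := Real.exp_pos (x * Real.cos θ)
  nlinarith

lemma bbG_pos {x : ℝ} (hx : 0 < x) : 0 < bbG x := by
  have key : bbG x = ∫ θ in (0:ℝ)..π,
      Real.cos θ * (Real.exp (x * Real.cos θ) - Real.exp (-(x * Real.cos θ))) := by
    have hsplit : bbG x = (∫ θ in (0:ℝ)..π, Real.exp (x * Real.cos θ) * Real.cos θ)
        + ∫ θ in π..(2*π), Real.exp (x * Real.cos θ) * Real.cos θ := by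
      rw [bbG, ← intervalIntegral.integral_add_adjacent_intervals
        (bb_integrable x Real.continuous_cos) (bb_integrable x Real.continuous_cos)]
    have hshift : (∫ θ in π..(2*π), Real.exp (x * Real.cos θ) * Real.cos θ)
        = ∫ θ in (0:ℝ)..π, Real.exp (x * Real.cos (θ + π)) * Real.cos (θ + π) := by
      rw [intervalIntegral.integral_comp_add_right
        (fun θ => Real.exp (x * Real.cos θ) * Real.cos θ) π]
      norm_num [two_mul]
    rw [hsplit, hshift, ← intervalIntegral.integral_add (bb_integrable x Real.continuous_cos)
      (by simpa [Real.cos_add_pi] using bb_integrable (-x) (by continuity : Continuous fun θ => -Real.cos θ))]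
    apply intervalIntegral.integral_congr
    intro θ _
    simp only [Real.cos_add_pi]
    ring_nf
  rw [key]
  have hnn : ∀ θ : ℝ, 0 ≤ Real.cos θ * (Real.exp (x * Real.cos θ) - Real.exp (-(x * Real.cos θ))) := by
    intro θ
    rcases le_or_gt 0 (Real.cos θ) with h | h
    · apply mul_nonneg h
      have : -(x * Real.cos θ) ≤ x * Real.cos θ := by nlinarith
      linarith [Real.exp_le_exp.2 this]
    · have h2 : x * Real.cos θ ≤ -(x * Real.cos θ) := by nlinarith
      nlinarith [Real.exp_le_exp.2 h2]
  have hInt : IntervalIntegrable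
      (fun θ => Real.cos θ * (Real.exp (x * Real.cos θ) - Real.exp (-(x * Real.cos θ))))
      volume 0 π := (Continuous.intervalIntegrable (by continuity) _ _)
  rw [intervalIntegral.integral_pos_iff_support_of_nonneg_ae (Eventually.of_forall hnn) hInt]
  refine ⟨Real.pi_pos, ?_⟩
  have hsub : Ioo 0 (π/2) ⊆ Function.support
      (fun θ => Real.cos θ * (Real.exp (x * Real.cos θ) - Real.exp (-(x * Real.cos θ))))
      ∩ Ioc 0 π := by
    intro θ hθ
    have hcpos : 0 < Real.cos θ := Real.cos_pos_of_mem_Ioo ⟨by linarith [hθ.1, Real.pi_pos], hθ.2⟩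
    constructor
    · have hlt : -(x * Real.cos θ) < x * Real.cos θ := by nlinarith
      have h3 := Real.exp_lt_exp.2 hlt
      exact Function.mem_support.2 (ne_of_gt (mul_pos hcpos (sub_pos.2 h3)))
    · exact ⟨hθ.1, by linarith [hθ.2, Real.pi_pos]⟩
  calc (0:ENNReal) < volume (Ioo 0 (π/2)) := by
        rw [Real.volume_Ioo]; simp [ENNReal.ofReal_pos]; positivity
    _ ≤ _ := measure_mono hsub

lemma bbQ_pos (x t : ℝ) :
    0 < ∫ θ in (0:ℝ)..(2*π), Real.exp (x * Real.cos θ) * (Real.cos θ - t)^2 := by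
  set f : ℝ → ℝ := fun θ => Real.exp (x * Real.cos θ) * (Real.cos θ - t)^2 with hf
  have hnn : ∀ θ, 0 ≤ f θ := fun θ => by positivity
  have hInt : IntervalIntegrable f volume 0 (2*π) := Continuous.intervalIntegrable (by continuity) _ _
  rw [intervalIntegral.integral_pos_iff_support_of_nonneg_ae (Eventually.of_forall hnn) hInt]
  refine ⟨by positivity, ?_⟩
  set s : Set ℝ := Ioo 0 π ∩ {θ | Real.cos θ = t} with hs
  have hsub : s.Subsingleton := by
    intro a ha b hb
    exact Real.injOn_cos ⟨ha.1.1.le, ha.1.2.le⟩ ⟨hb.1.1.le, hb.1.2.le⟩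
      (ha.2.trans hb.2.symm)
  have hs0 : volume s = 0 := hsub.measure_zero volume
  have hsub2 : Ioo 0 π \ s ⊆ Function.support f ∩ Ioc 0 (2*π) := by
    intro θ hθ
    have hne : Real.cos θ ≠ t := fun h => hθ.2 ⟨hθ.1, h⟩
    constructor
    · have h2 : (0:ℝ) < (Real.cos θ - t)^2 := by have := sub_ne_zero.2 hne; positivity
      exact Function.mem_support.2 (ne_of_gt (mul_pos (Real.exp_pos _) h2))
    · exact ⟨hθ.1.1, by linarith [hθ.1.2, Real.pi_pos]⟩
  calc (0:ENNReal) < volume (Ioo 0 π \ s) := by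
        rw [measure_diff_null hs0, Real.volume_Ioo]
        simp [ENNReal.ofReal_pos]; positivity
    _ ≤ _ := measure_mono hsub2

lemma bbQ_expand (x t : ℝ) :
    (∫ θ in (0:ℝ)..(2*π), Real.exp (x * Real.cos θ) * (Real.cos θ - t)^2)
      = bbH x - 2*t*bbG x + t^2 * bbF x := by
  have h1 : ∀ θ : ℝ, Real.exp (x * Real.cos θ) * (Real.cos θ - t)^2
      = Real.exp (x * Real.cos θ) * Real.cos θ * Real.cos θ
        - (2*t) * (Real.exp (x * Real.cos θ) * Real.cos θ)
        + t^2 * (Real.exp (x * Real.cos θ) * 1) := by intro θ; ring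
  rw [intervalIntegral.integral_congr (fun θ _ => h1 θ)]
  have iH : IntervalIntegrable (fun θ => Real.exp (x * Real.cos θ) * Real.cos θ * Real.cos θ)
      volume 0 (2*π) := Continuous.intervalIntegrable (by continuity) _ _
  have iG : IntervalIntegrable (fun θ => (2*t) * (Real.exp (x * Real.cos θ) * Real.cos θ))
      volume 0 (2*π) := Continuous.intervalIntegrable (by continuity) _ _
  have iF : IntervalIntegrable (fun θ => t^2 * (Real.exp (x * Real.cos θ) * 1))
      volume 0 (2*π) := Continuous.intervalIntegrable (by continuity) _ _
  rw [intervalIntegral.integral_add (iH.sub iG) iF, intervalIntegral.integral_sub iH iG,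
    intervalIntegral.integral_const_mul, intervalIntegral.integral_const_mul]
  simp only [mul_one]
  rfl

lemma bbF_hasDeriv (x : ℝ) : HasDerivAt bbF (bbG x) x := by
  have h := bb_hasDerivAt (g := fun _ => (1:ℝ)) continuous_const (fun θ => by norm_num) x
  simp only [mul_one] at h; exact h

lemma bbG_hasDeriv (x : ℝ) : HasDerivAt bbG (bbH x) x := by
  have h := bb_hasDerivAt (g := Real.cos) Real.continuous_cos (fun θ => Real.abs_cos_le_one θ) x
  exact h

lemma bb_num_pos (x : ℝ) : 0 < bbH x * bbF x - bbG x * bbG x := by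
  have hF := bbF_pos x
  have hQ := bbQ_pos x (bbG x / bbF x)
  rw [bbQ_expand] at hQ
  have h : bbH x * bbF x - bbG x * bbG x
      = (bbH x - 2*(bbG x / bbF x)*bbG x + (bbG x / bbF x)^2 * bbF x) * bbF x := by
    field_simp
    ring
  rw [h]
  exact mul_pos hQ hF

lemma bb_ratio_eq (x : ℝ) : besselI1 x / besselI0 x = bbG x / bbF x := by
  have hπ : (1 / (2*π)) ≠ 0 := by positivity
  rw [besselI1, besselI0, mul_div_mul_left _ _ hπ]; rfl

lemma bb_ratio_hasDeriv (x : ℝ) :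
    HasDerivAt (fun y => bbG y / bbF y)
      ((bbH x * bbF x - bbG x * bbG x) / (bbF x)^2) x :=
  (bbG_hasDeriv x).div (bbF_hasDeriv x) (bbF_pos x).ne'

lemma bb_ratio_continuous : Continuous (fun y => bbG y / bbF y) := by
  have hG : Continuous bbG := by
    rw [continuous_iff_continuousAt]; exact fun x => (bbG_hasDeriv x).continuousAt
  have hF : Continuous bbF := by
    rw [continuous_iff_continuousAt]; exact fun x => (bbF_hasDeriv x).continuousAt
  exact hG.div hF fun x => (bbF_pos x).ne'

lemma bb_strictMono : StrictMonoOn (fun y => bbG y / bbF y) (Set.Ioi (0:ℝ)) := by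
  apply strictMonoOn_of_deriv_pos (convex_Ioi 0) bb_ratio_continuous.continuousOn
  intro x _
  rw [(bb_ratio_hasDeriv x).deriv]
  exact div_pos (bb_num_pos x) (pow_pos (bbF_pos x) 2)

lemma bbF_zero : bbF 0 = 2*π := by simp [bbF]

lemma bbG_zero : bbG 0 = 0 := by simp [bbG, integral_cos]

lemma bbD_eq (x : ℝ) : bbF x - bbG x
    = ∫ θ in (0:ℝ)..(2*π), Real.exp (x * Real.cos θ) * (1 - Real.cos θ) := by
  rw [bbF, bbG, ← intervalIntegral.integral_sub
    (by simpa using bb_integrable x (continuous_const (y := (1:ℝ))))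
    (bb_integrable x Real.continuous_cos)]
  apply intervalIntegral.integral_congr
  intro θ _; ring

lemma bbD_le (δ x : ℝ) (hx : 0 ≤ x) :
    bbF x - bbG x ≤ (1 - Real.cos δ) * bbF x + 2 * Real.exp (x * Real.cos δ) * (2*π) := by
  rw [bbD_eq]
  have hpt : ∀ θ ∈ Icc (0:ℝ) (2*π), Real.exp (x * Real.cos θ) * (1 - Real.cos θ)
      ≤ (1 - Real.cos δ) * Real.exp (x * Real.cos θ) + 2 * Real.exp (x * Real.cos δ) := by
    intro θ _
    rcases le_or_gt (Real.cos δ) (Real.cos θ) with h | h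
    · nlinarith [Real.exp_pos (x * Real.cos θ), Real.exp_pos (x * Real.cos δ),
        mul_nonneg (sub_nonneg.2 h) (Real.exp_pos (x * Real.cos θ)).le]
    · have hle : Real.exp (x * Real.cos θ) ≤ Real.exp (x * Real.cos δ) :=
        Real.exp_le_exp.2 (mul_le_mul_of_nonneg_left h.le hx)
      nlinarith [Real.exp_pos (x * Real.cos θ), Real.cos_le_one δ, Real.neg_one_le_cos θ,
        Real.cos_le_one θ, mul_nonneg (sub_nonneg.2 (Real.cos_le_one δ)) (Real.exp_pos (x * Real.cos θ)).le]
  have hmono := intervalIntegral.integral_mono_on (by positivity : (0:ℝ) ≤ 2*π)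
    (bb_integrable x (by continuity : Continuous fun θ => 1 - Real.cos θ))
    (Continuous.intervalIntegrable (by continuity) _ _) hpt
  refine hmono.trans ?_
  have i1 : IntervalIntegrable (fun θ => (1 - Real.cos δ) * Real.exp (x * Real.cos θ))
      volume 0 (2*π) := Continuous.intervalIntegrable (by continuity) _ _
  have i2 : IntervalIntegrable (fun _ : ℝ => 2 * Real.exp (x * Real.cos δ))
      volume 0 (2*π) := intervalIntegrable_const
  rw [intervalIntegral.integral_add i1 i2,
    intervalIntegral.integral_const_mul, intervalIntegral.integral_const]
  rw [← bbF]
  simp [smul_eq_mul]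
  ring_nf
  exact le_refl _

lemma bbF_lower (δ x : ℝ) (hδ : 0 < δ) (hδ2 : δ ≤ π) (hx : 0 ≤ x) :
    (δ/2) * Real.exp (x * Real.cos (δ/2)) ≤ bbF x := by
  have hπ := Real.pi_pos
  have hsplit : bbF x = (∫ θ in (0:ℝ)..(δ/2), Real.exp (x * Real.cos θ))
      + ∫ θ in (δ/2)..(2*π), Real.exp (x * Real.cos θ) := by
    rw [bbF, ← intervalIntegral.integral_add_adjacent_intervals
      (Continuous.intervalIntegrable (by continuity) _ _)
      (Continuous.intervalIntegrable (by continuity) _ _)]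
  have h2 : (0:ℝ) ≤ ∫ θ in (δ/2)..(2*π), Real.exp (x * Real.cos θ) :=
    intervalIntegral.integral_nonneg (by linarith) (fun θ _ => (Real.exp_pos _).le)
  have h1 : (δ/2) * Real.exp (x * Real.cos (δ/2)) ≤ ∫ θ in (0:ℝ)..(δ/2), Real.exp (x * Real.cos θ) := by
    have j1 : IntervalIntegrable (fun _ : ℝ => Real.exp (x * Real.cos (δ/2)))
        volume 0 (δ/2) := intervalIntegrable_const
    have j2 : IntervalIntegrable (fun θ => Real.exp (x * Real.cos θ))
        volume 0 (δ/2) := Continuous.intervalIntegrable (by continuity) _ _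
    have hmono := intervalIntegral.integral_mono_on (by linarith : (0:ℝ) ≤ δ/2)
      j1 j2 (fun θ hθ => ?_)
    · calc (δ/2) * Real.exp (x * Real.cos (δ/2))
          = ∫ _ in (0:ℝ)..(δ/2), Real.exp (x * Real.cos (δ/2)) := by
            rw [intervalIntegral.integral_const, smul_eq_mul]; ring
        _ ≤ _ := hmono
    · exact Real.exp_le_exp.2 (mul_le_mul_of_nonneg_left
        (Real.cos_le_cos_of_nonneg_of_le_pi hθ.1 (by linarith) hθ.2) hx)
  linarith [hsplit]

lemma bb_tendsto_atTop : Tendsto (fun x => bbG x / bbF x) atTop (nhds 1) := by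
  have hπ := Real.pi_pos
  rw [Metric.tendsto_nhds]
  intro ε hε
  -- choose δ
  have hcos : Tendsto Real.cos (nhdsWithin 0 (Ioi 0)) (nhds 1) := by
    simpa [Real.cos_zero] using
      (Real.continuous_cos.continuousAt (x := (0:ℝ))).tendsto.mono_left nhdsWithin_le_nhds
  have h1 : ∀ᶠ δ in nhdsWithin (0:ℝ) (Ioi 0), 1 - ε/2 < Real.cos δ :=
    hcos.eventually (eventually_gt_nhds (by linarith))
  have h2 : ∀ᶠ δ in nhdsWithin (0:ℝ) (Ioi 0), δ ∈ Ioo (0:ℝ) (π/2) :=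
    eventually_of_mem (Ioo_mem_nhdsGT (by linarith)) (fun δ hδ => hδ)
  obtain ⟨δ, hδcos, hδmem⟩ := (h1.and h2).exists
  have hδpos : 0 < δ := hδmem.1
  have hδpi : δ ≤ π := by linarith [hδmem.2]
  set c := Real.cos (δ/2) - Real.cos δ with hcdef
  have hc : 0 < c := by
    have := Real.cos_lt_cos_of_nonneg_of_le_pi (by positivity : (0:ℝ) ≤ δ/2) hδpi
      (by linarith : δ/2 < δ)
    simpa [hcdef] using sub_pos.2 this
  have hlim : Tendsto (fun x : ℝ => (8*π/δ) * Real.exp (-(x*c))) atTop (nhds 0) := by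
    have h3 : Tendsto (fun x : ℝ => -(x*c)) atTop atBot := by
      have := (tendsto_id (α := ℝ) (x := atTop)).atTop_mul_const' hc
      exact tendsto_neg_atTop_atBot.comp this
    have h4 := (Real.tendsto_exp_atBot.comp h3).const_mul (8*π/δ)
    simpa using h4
  filter_upwards [hlim.eventually (gt_mem_nhds (by linarith : (0:ℝ) < ε/2)),
    eventually_ge_atTop (1:ℝ)] with x hx1 hx2
  have hx0 : (0:ℝ) ≤ x := by linarith
  have hF := bbF_pos x
  have hD := bbF_sub_bbG_pos x
  have h5 : bbG x / bbF x - 1 = -((bbF x - bbG x)/bbF x) := by field_simp; ring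
  rw [Real.dist_eq, h5, abs_neg, abs_of_pos (div_pos hD hF)]
  have hb1 := bbD_le δ x hx0
  have hb2 := bbF_lower δ x hδpos hδpi hx0
  have hlowpos : (0:ℝ) < (δ/2) * Real.exp (x * Real.cos (δ/2)) := by positivity
  have hE : (0:ℝ) ≤ 2 * Real.exp (x * Real.cos δ) * (2*π) := by positivity
  have key : (bbF x - bbG x)/bbF x
      ≤ (1 - Real.cos δ) + (8*π/δ) * Real.exp (-(x*c)) := by
    have step1 : (bbF x - bbG x)/bbF x
        ≤ ((1 - Real.cos δ) * bbF x + 2 * Real.exp (x * Real.cos δ) * (2*π))/bbF x :=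
      (div_le_div_iff_of_pos_right hF).2 hb1
    have step2 : ((1 - Real.cos δ) * bbF x + 2 * Real.exp (x * Real.cos δ) * (2*π))/bbF x
        = (1 - Real.cos δ) + (2 * Real.exp (x * Real.cos δ) * (2*π))/bbF x := by
      field_simp
    have step3 : (2 * Real.exp (x * Real.cos δ) * (2*π))/bbF x
        ≤ (2 * Real.exp (x * Real.cos δ) * (2*π))/((δ/2) * Real.exp (x * Real.cos (δ/2))) := by
      rcases eq_or_lt_of_le hE with hE0 | hEpos
      · rw [← hE0]; simp
      · exact (div_le_div_iff_of_pos_left hEpos hF hlowpos).2 hb2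
    have step4 : (2 * Real.exp (x * Real.cos δ) * (2*π))/((δ/2) * Real.exp (x * Real.cos (δ/2)))
        = (8*π/δ) * Real.exp (-(x*c)) := by
      have he : Real.exp (-(x*c)) = Real.exp (x * Real.cos δ) / Real.exp (x * Real.cos (δ/2)) := by
        rw [← Real.exp_sub]; congr 1; rw [hcdef]; ring
      rw [he]
      field_simp
      ring
    calc (bbF x - bbG x)/bbF x ≤ _ := step1
      _ = _ := step2
      _ ≤ (1 - Real.cos δ) + (2 * Real.exp (x * Real.cos δ) * (2*π))/((δ/2) * Real.exp (x * Real.cos (δ/2))) := by linarith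
      _ = _ := by rw [step4]
  have : (1 - Real.cos δ) < ε/2 := by linarith
  linarith


/-- `x ↦ I₁(x)/I₀(x)` is strictly increasing on `(0,∞)`, takes values in `(0,1)`,
tends to `0` at `0⁺` and to `1` at `∞`. -/
theorem besselRatio_strictMono_range :
    StrictMonoOn (fun x => besselI1 x / besselI0 x) (Set.Ioi (0:ℝ))
    ∧ (∀ x : ℝ, 0 < x → 0 < besselI1 x / besselI0 x ∧ besselI1 x / besselI0 x < 1)
    ∧ Filter.Tendsto (fun x => besselI1 x / besselI0 x) (nhdsWithin 0 (Set.Ioi 0)) (nhds 0)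
    ∧ Filter.Tendsto (fun x => besselI1 x / besselI0 x) Filter.atTop (nhds 1) := by
  have hfun : (fun x => besselI1 x / besselI0 x) = fun x => bbG x / bbF x :=
    funext bb_ratio_eq
  rw [hfun]
  refine ⟨bb_strictMono, fun x hx => ?_, ?_, bb_tendsto_atTop⟩
  · rw [bb_ratio_eq x]
    constructor
    · exact div_pos (bbG_pos hx) (bbF_pos x)
    · rw [div_lt_one (bbF_pos x)]
      linarith [bbF_sub_bbG_pos x]
  · have h0 : bbG 0 / bbF 0 = 0 := by
      simp [bbG_zero]
    have := bb_ratio_continuous.continuousAt (x := (0:ℝ))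
    have h := this.tendsto.mono_left (nhdsWithin_le_nhds (s := Set.Ioi (0:ℝ)))
    rwa [h0] at h
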